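/- Let θ ∈ ℝ, σ, σ' nonzero reals, R₁ the rotation matrix with angle θ, and define R₂ = diag(1, 1/σ') · R₁ᵀ · diag(1, σ). If det(R₂ R₂ᵀ − I) = 0 and σ² ≠ 1 and σ'² ≠ 1, then sin θ = 0. -/

import Mathlib

open Matrix Real


private lemma tr2 (a b c d : ℝ) : (!![a, b; c, d])ᵀ = !![a, c; b, d] := by
  ext i j; fin_cases i <;> fin_cases j <;> simp

theorem stmt_6 (θ σ σ' : ℝ) (hσ : σ ≠ 0) (hσ' : σ' ≠ 0)
    (hσ1 : σ ^ 2 ≠ 1) (hσ'1 : σ' ^ 2 ≠ 1)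
    (R₁ R₂ : Matrix (Fin 2) (Fin 2) ℝ)
    (hR₁ : R₁ = !![cos θ, -sin θ; sin θ, cos θ])
    (hR₂ : R₂ = diagonal ![1, 1 / σ'] * R₁ᵀ * diagonal ![1, σ])
    (h : (R₂ * R₂ᵀ - 1).det = 0) :
    sin θ = 0 := by
  subst hR₁ hR₂
  have hc : cos θ ^ 2 = 1 - sin θ ^ 2 := by
    have := sin_sq_add_cos_sq θ; nlinarith
  rw [show (diagonal ![1, 1/σ'] * (!![cos θ, -sin θ; sin θ, cos θ])ᵀ * diagonal ![(1:ℝ), σ])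
      = !![cos θ, σ * sin θ; -sin θ/σ', σ * cos θ/σ'] by
    rw [tr2]
    ext i j; fin_cases i <;> fin_cases j <;>
      simp [Matrix.mul_apply, Fin.sum_univ_two, Matrix.diagonal] <;> ring] at h
  rw [show (!![cos θ, σ * sin θ; -sin θ/σ', σ * cos θ/σ'] *
      (!![cos θ, σ * sin θ; -sin θ/σ', σ * cos θ/σ'])ᵀ - 1)
      = !![cos θ^2 + σ^2*sin θ^2 - 1, -sin θ*cos θ/σ' + σ^2*sin θ*cos θ/σ';
          -sin θ*cos θ/σ' + σ^2*sin θ*cos θ/σ', sin θ^2/σ'^2 + σ^2*cos θ^2/σ'^2 - 1] by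
    rw [tr2]
    ext i j; fin_cases i <;> fin_cases j <;>
      simp [Matrix.mul_apply, Fin.sum_univ_two, Matrix.one_apply] <;> ring] at h
  rw [Matrix.det_fin_two_of] at h
  have hσ'2 : σ'^2 ≠ 0 := pow_ne_zero _ hσ'
  field_simp at h
  have key : sin θ ^ 2 * ((σ^2 - 1) * (1 - σ'^2)) * (σ'^2 * σ'^2) = 0 := by
    rw [hc] at h
    linear_combination σ'^2 * σ'^2 * h
  have key2 : sin θ ^ 2 * ((σ^2 - 1) * (1 - σ'^2)) = 0 := by
    have := mul_eq_zero.mp key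
    rcases this with h3 | h3
    · exact h3
    · exact absurd h3 (mul_ne_zero hσ'2 hσ'2)
  have h2 : (σ^2 - 1) * (1 - σ'^2) ≠ 0 := by
    apply mul_ne_zero
    · exact sub_ne_zero.mpr hσ1
    · intro hh; apply hσ'1; linarith [sub_eq_zero.mp hh]
  rcases mul_eq_zero.mp key2 with h3 | h3
  · exact pow_eq_zero_iff (by norm_num) |>.mp h3
  · exact absurd h3 h2
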